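/- Let jobs 1,…,n have arrival times a_j ∈ ℕ (sorted non-decreasingly), energies e_j ≥ 0, and minimum allowance l_min ≥ 1. If there exists a partition of the jobs into m groups with m ≤ (a_n − a₁)/l_min + 2, then for real b ≥ 1 the maximum achievable attack cost C_max (over all clique partitions, where a partition's cost is the sum over groups of (group total energy)^b) satisfies C_max ≥ (l_min · ∑_j e_j / (2·l_min + a_n − a₁))^b. -/

import Mathlib

open NNReal Finset

theorem cmax_lower_bound (n : ℕ) (hn : 0 < n)
    (a : Fin n → ℕ) (hsorted : Monotone a)
    (e : Fin n → ℝ≥0)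
    (lmin : ℕ) (hl : 1 ≤ lmin)
    (b : ℝ) (hb : 1 ≤ b)
    (m : ℕ) (K : Fin m → Finset (Fin n))
    (hdisj : ∀ i i' : Fin m, i ≠ i' → Disjoint (K i) (K i'))
    (hcover : ∀ j : Fin n, ∃ i, j ∈ K i)
    (hm : (m : ℝ) ≤ ((a ⟨n - 1, by omega⟩ : ℝ) - (a ⟨0, hn⟩ : ℝ)) / (lmin : ℝ) + 2)
    (Cmax : ℝ≥0)
    (hCmax : ∑ i, (∑ j ∈ K i, e j) ^ b ≤ Cmax) :
    ((lmin : ℝ≥0) * ∑ j, e j /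
        (2 * (lmin : ℝ≥0) + ((a ⟨n - 1, by omega⟩ - a ⟨0, hn⟩ : ℕ) : ℝ≥0))) ^ b
      ≤ Cmax := by
  have hm0 : 0 < m := (hcover ⟨0, hn⟩).choose.pos
  have hale : a ⟨0, hn⟩ ≤ a ⟨n - 1, by omega⟩ := hsorted (by simp [Fin.le_def])
  set D : ℕ := a ⟨n - 1, by omega⟩ - a ⟨0, hn⟩ with hDdef
  -- the key natural-number inequality
  have hnat : lmin * m ≤ 2 * lmin + D := by
    have hl0 : (0:ℝ) < lmin := by exact_mod_cast hl
    have h1 : (lmin : ℝ) * m ≤ 2 * lmin + D := by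
      rw [div_add' _ _ _ (ne_of_gt hl0), le_div_iff₀ hl0] at hm
      have hcast : (D : ℝ) = (a ⟨n - 1, by omega⟩ : ℝ) - (a ⟨0, hn⟩ : ℝ) := by
        rw [hDdef]; push_cast [Nat.cast_sub hale]; ring
      nlinarith
    exact_mod_cast h1
  -- the sums over the partition add up to the total
  have hsum : ∑ i, ∑ j ∈ K i, e j = ∑ j, e j := by
    have hpd : ((univ : Finset (Fin m)) : Set (Fin m)).PairwiseDisjoint K :=
      fun i _ i' _ h => hdisj i i' h
    have huniv : (univ : Finset (Fin m)).disjiUnion K hpd = (univ : Finset (Fin n)) := by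
      ext j
      simpa using hcover j
    rw [← Finset.sum_disjiUnion, huniv]
    exact hpd
  set x : Fin m → ℝ≥0 := fun i => ∑ j ∈ K i, e j with hx
  set E : ℝ≥0 := ∑ j, e j with hE
  -- power-mean inequality with equal weights 1/m
  have hw : ∑ _i : Fin m, ((m : ℝ≥0))⁻¹ = 1 := by
    rw [Finset.sum_const, Finset.card_univ, Fintype.card_fin, nsmul_eq_mul,
      mul_inv_cancel₀]
    exact_mod_cast hm0.ne'
  have hpm := NNReal.rpow_arith_mean_le_arith_mean_rpow univ (fun _ => ((m : ℝ≥0))⁻¹) x hw hb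
  have hmean1 : (∑ i, ((m : ℝ≥0))⁻¹ * x i) = E / m := by
    rw [← Finset.mul_sum, hsum, div_eq_inv_mul]
  have hmean2 : (∑ i, ((m : ℝ≥0))⁻¹ * x i ^ b) ≤ Cmax := by
    rw [← Finset.mul_sum]
    calc ((m : ℝ≥0))⁻¹ * ∑ i, x i ^ b ≤ 1 * ∑ i, x i ^ b := by
          gcongr
          exact inv_le_one_of_one_le₀ (Nat.one_le_cast.mpr hm0)
      _ ≤ Cmax := by rw [one_mul]; exact hCmax
  have hstep : (E / m) ^ b ≤ Cmax := by
    rw [← hmean1]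
    exact le_trans hpm hmean2
  refine le_trans ?_ hstep
  apply NNReal.rpow_le_rpow _ (le_trans zero_le_one hb)
  -- lmin * E / (2*lmin + D) ≤ E / m
  have hre : (lmin : ℝ≥0) * ∑ j, e j / (2 * (lmin : ℝ≥0) + (D : ℝ≥0)) =
      (lmin : ℝ≥0) * E / (2 * (lmin : ℝ≥0) + (D : ℝ≥0)) := by
    rw [← Finset.sum_div, ← hE, mul_div_assoc]
  rw [hre, div_le_div_iff₀ (by positivity) (by exact_mod_cast hm0)]
  calc (lmin : ℝ≥0) * E * m = E * ((lmin : ℝ≥0) * m) := by ring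
    _ ≤ E * (2 * lmin + D) := by
        gcongr
        have : ((lmin * m : ℕ) : ℝ≥0) ≤ ((2 * lmin + D : ℕ) : ℝ≥0) := by exact_mod_cast hnat
        push_cast at this
        exact this
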